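/- Let H be a finite-dimensional Hopf algebra over k, (V,Y,1,s) an H-module field algebra (equivalently, a right H*-comodule field algebra), and t a nonzero left integral of H. Then the map t̂: V → V^H, v ↦ tv, is surjective if and only if there exists a total integral φ: H* → V, that is, a right H*-comodule map with φ(1_{H*}) = 1. -/

import Mathlib

open scoped TensorProduct DirectSum

namespace HopfVA

/-- Generalized binomial coefficient `C(r, j)` for an integer `r` (exact division). -/
def ibinom (r : ℤ) (j : ℕ) : ℤ := (∏ i ∈ Finset.range j, (r - (i : ℤ))) / (j.factorial : ℤ)

/-- `(-1)^q` for an integer exponent `q`. -/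
def negOnePow (q : ℤ) : ℤ := if Even q then 1 else -1

section Core

variable {k : Type*} [CommRing k] {V : Type*} [AddCommGroup V] [Module k V]

/-- If `f p q` is the coefficient of `z^p w^q` of a two-variable formal distribution,
then `zwMul n f p q` is the coefficient of `z^p w^q` of `(z-w)^n` times that distribution. -/
def zwMul (n : ℕ) (f : ℤ → ℤ → V) : ℤ → ℤ → V := fun p q =>
  ∑ i ∈ Finset.range (n + 1),
    ((-1 : ℤ) ^ i * (n.choose i : ℤ)) • f (p - ((n : ℤ) - (i : ℤ))) (q - (i : ℤ))

/-- The data of a state-field correspondence on a pointed vector space: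
`Y a n b` is the `n`-th product `a_n b` (so that `Y(a,z)b = ∑ (a_n b) z^{-n-1}`),
`vac` is the vacuum vector and `T` is the translation operator. -/
structure VAData (k V : Type*) [CommRing k] [AddCommGroup V] [Module k V] where
  Y : V →ₗ[k] ℤ → Module.End k V
  vac : V
  T : Module.End k V

namespace VAData

variable (F : VAData k V)

/-- coefficient of `z^p w^q` in `Y(a,z)Y(b,w)c`. -/
def prodZW (a b c : V) : ℤ → ℤ → V := fun p q => F.Y a (-p - 1) (F.Y b (-q - 1) c)

/-- coefficient of `z^p w^q` in `Y(b,w)Y(a,z)c`. -/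
def prodWZ (a b c : V) : ℤ → ℤ → V := fun p q => F.Y b (-q - 1) (F.Y a (-p - 1) c)

/-- coefficient of `z^p w^q` in `i_{z,w} Y(a,z-w)Y(b,-w)c`. -/
noncomputable def compLHS (a b c : V) : ℤ → ℤ → V := fun p q =>
  negOnePow q •
    ∑ᶠ j : ℕ, ibinom (p + (j : ℤ)) j • F.Y a (-p - 1 - (j : ℤ)) (F.Y b ((j : ℤ) - 1 - q) c)

/-- Truncated (at `j < J`) version of `compLHS`, for `h`-adic statements. -/
def compLHStr (J : ℕ) (a b c : V) : ℤ → ℤ → V := fun p q =>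
  negOnePow q •
    ∑ j ∈ Finset.range J, ibinom (p + (j : ℤ)) j • F.Y a (-p - 1 - (j : ℤ)) (F.Y b ((j : ℤ) - 1 - q) c)

/-- coefficient of `z^p w^q` in `Y(Y(a,z)b,-w)c`. -/
def compRHS (a b c : V) : ℤ → ℤ → V := fun p q =>
  negOnePow q • F.Y (F.Y a (-p - 1) b) (-q - 1) c

/-- The axioms of a state-field correspondence: truncation, the vacuum axioms
`Y(1,z)a = a`, `Y(a,z)1 = a + (Ta)z + ⋯ ∈ V[[z]]`, and translation covariance
`[T, Y(a,z)] = Y(Ta,z) = ∂_z Y(a,z)`. -/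
def IsStateField : Prop :=
  (∀ a b : V, ∃ N : ℤ, ∀ n : ℤ, N ≤ n → F.Y a n b = 0) ∧
  (∀ (a : V) (n : ℤ), F.Y F.vac n a = if n = -1 then a else 0) ∧
  (∀ (a : V) (n : ℤ), 0 ≤ n → F.Y a n F.vac = 0) ∧
  (∀ a : V, F.Y a (-1) F.vac = a) ∧
  (∀ a : V, F.Y a (-2) F.vac = F.T a) ∧
  (∀ (a b : V) (n : ℤ), F.Y (F.T a) n b = F.T (F.Y a n b) - F.Y a n (F.T b)) ∧
  (∀ (a b : V) (n : ℤ), F.Y (F.T a) n b = (-n : ℤ) • F.Y a (n - 1) b)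

/-- The associativity relation
`(z-w)^N i_{z,w} Y(a,z-w)Y(b,-w)c = (z-w)^N Y(Y(a,z)b,-w)c`. -/
def IsAssocFA : Prop := ∀ a b c : V, ∃ N : ℕ, ∀ p q : ℤ,
  zwMul N (F.compLHS a b c) p q = zwMul N (F.compRHS a b c) p q

/-- A field algebra is a state-field correspondence satisfying associativity. -/
def IsFieldAlgebra : Prop := F.IsStateField ∧ F.IsAssocFA

/-- `(z-w)^n [Y(a,z), Y(b,w)] = 0`. -/
def IsLocalPair (a b : V) : Prop :=
  ∃ n : ℕ, ∀ (c : V) (p q : ℤ), zwMul n (F.prodZW a b c) p q = zwMul n (F.prodWZ a b c) p q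

/-- A vertex algebra is a field algebra all of whose pairs of fields are local. -/
def IsVertexAlgebra : Prop := F.IsFieldAlgebra ∧ ∀ a b : V, F.IsLocalPair a b

/-- `(z-w)^n Y(a,z)Y(b,w) = (z-w)^n ∑ᵢ Y(bⁱ,w)Y(aⁱ,z)`. -/
def IsSLocalPair (a b : V) : Prop :=
  ∃ (n m : ℕ) (A B : Fin m → V), ∀ (c : V) (p q : ℤ),
    zwMul n (F.prodZW a b c) p q = ∑ i, zwMul n (F.prodWZ (A i) (B i) c) p q

/-- An `S`-local vertex algebra is a field algebra all of whose pairs of fields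
are `S`-local. -/
def IsSLocalVA : Prop := F.IsFieldAlgebra ∧ ∀ a b : V, F.IsSLocalPair a b

end VAData

/-- Data of a module over a field algebra: the module fields `Y^M` and translation `sM`. -/
structure VModData (k V M : Type*) [CommRing k] [AddCommGroup V] [Module k V]
    [AddCommGroup M] [Module k M] where
  YM : V →ₗ[k] ℤ → Module.End k M
  sM : Module.End k M

namespace VModData

variable {M : Type*} [AddCommGroup M] [Module k M]

/-- coefficient of `z^p w^q` in `Y^M(a,z)Y^M(b,w)x`. -/
def mprodZW (Mo : VModData k V M) (a b : V) (x : M) : ℤ → ℤ → M := fun p q =>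
  Mo.YM a (-p - 1) (Mo.YM b (-q - 1) x)

/-- coefficient of `z^p w^q` in `Y^M(b,w)Y^M(a,z)x`. -/
def mprodWZ (Mo : VModData k V M) (a b : V) (x : M) : ℤ → ℤ → M := fun p q =>
  Mo.YM b (-q - 1) (Mo.YM a (-p - 1) x)

/-- coefficient of `z^p w^q` in `i_{z,w} Y^M(a,z-w)Y^M(b,-w)x`. -/
noncomputable def mcompLHS (Mo : VModData k V M) (a b : V) (x : M) : ℤ → ℤ → M := fun p q =>
  negOnePow q •
    ∑ᶠ j : ℕ, ibinom (p + (j : ℤ)) j • Mo.YM a (-p - 1 - (j : ℤ)) (Mo.YM b ((j : ℤ) - 1 - q) x)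

/-- coefficient of `z^p w^q` in `Y^M(Y(a,z)b,-w)x`. -/
def mcompRHS (F : VAData k V) (Mo : VModData k V M) (a b : V) (x : M) : ℤ → ℤ → M := fun p q =>
  negOnePow q • Mo.YM (F.Y a (-p - 1) b) (-q - 1) x

/-- `M` is a left module over the field algebra `F`: truncation, vacuum, translation
invariance and the associativity axiom. -/
def IsModule (F : VAData k V) (Mo : VModData k V M) : Prop :=
  (∀ (a : V) (x : M), ∃ N : ℤ, ∀ n : ℤ, N ≤ n → Mo.YM a n x = 0) ∧
  (∀ (x : M) (n : ℤ), Mo.YM F.vac n x = if n = -1 then x else 0) ∧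
  (∀ (a : V) (x : M) (n : ℤ),
      Mo.sM (Mo.YM a n x) - Mo.YM a n (Mo.sM x) = (-n : ℤ) • Mo.YM a (n - 1) x) ∧
  (∀ (a b : V) (x : M), ∃ N : ℕ, ∀ p q : ℤ,
      zwMul N (mcompLHS Mo a b x) p q = zwMul N (mcompRHS F Mo a b x) p q)

/-- Locality of the module fields `Y^M(a,z)`, `Y^M(b,w)`. -/
def IsLocalModPair (Mo : VModData k V M) (a b : V) : Prop :=
  ∃ n : ℕ, ∀ (x : M) (p q : ℤ),
    zwMul n (mprodZW Mo a b x) p q = zwMul n (mprodWZ Mo a b x) p q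

/-- `S`-locality of the module fields. -/
def IsSLocalModPair (Mo : VModData k V M) (a b : V) : Prop :=
  ∃ (n m : ℕ) (A B : Fin m → V), ∀ (x : M) (p q : ℤ),
    zwMul n (mprodZW Mo a b x) p q = ∑ i, zwMul n (mprodWZ Mo (A i) (B i) x) p q

end VModData

/-- The `f`-product `a_(f) b = Res_z f(z) Y(a,z) b`, where `f n` is the coefficient
of `z^n` in `f`. -/
noncomputable def fProduct (F : VAData k V) (f : ℤ → k) (a b : V) : V :=
  ∑ᶠ n : ℤ, f n • F.Y a n b

/-- Coefficients of the formal derivative `∂_z f`. -/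
def derivCoef (f : ℤ → k) : ℤ → k := fun n => ((n : ℤ) + 1 : ℤ) • f (n + 1)

/-- The subspace `V_(g) V` spanned by all products `a_(g) b` with `g = ∂_z f`. -/
noncomputable def gSpan (F : VAData k V) (f : ℤ → k) : Submodule k V :=
  Submodule.span k {x : V | ∃ a b : V, x = fProduct F (derivCoef f) a b}

/-- `x ≡ y mod h^M`, where `h = r`. -/
def ModH (r : k) (M : ℕ) (x y : V) : Prop := ∃ v : V, x - y = r ^ M • v

/-- An automorphism of the (state-field data of a) vertex algebra `F`. -/
def IsVAAut (F : VAData k V) (φ : V ≃ₗ[k] V) : Prop :=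
  φ F.vac = F.vac ∧ (∀ v : V, φ (F.T v) = F.T (φ v)) ∧
  ∀ (a b : V) (n : ℤ), φ (F.Y a n b) = F.Y (φ a) n (φ b)

end Core

/-- The coefficients of `f(z) = z⁻¹`. -/
def zinvCoef (k : Type*) [CommRing k] : ℤ → k := fun n => if n = -1 then 1 else 0

/-- The coefficients of `f(z) = c·e^{cz}/(e^{cz}-1)
  = z⁻¹ + c + ∑_{m≥1} B_m c^m z^{m-1}/m!` (Bernoulli numbers `B_m`). -/
noncomputable def berCoef {k : Type*} [Field k] [CharZero k] (c : k) : ℤ → k := fun n =>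
  if n < -1 then 0
  else ((bernoulli (n + 1).toNat : ℚ) • (c ^ (n + 1).toNat)) / ((n + 1).toNat.factorial : k)
        + (if n = 0 then c else 0)

/-- `f(z) = z⁻¹` or `f(z) = c·e^{cz}/(e^{cz}-1)` with `c ≠ 0`. -/
def AdmissibleF {k : Type*} [Field k] [CharZero k] (f : ℤ → k) : Prop :=
  f = zinvCoef k ∨ ∃ c : k, c ≠ 0 ∧ f = berCoef c

section HopfDefs

variable {k : Type*} [CommRing k] {V : Type*} [AddCommGroup V] [Module k V]
variable (H : Type*) [Ring H] [HopfAlgebra k H]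

/-- `V` is an `H`-module field algebra: `h·1 = ε(h)1`, `h(Ta) = T(ha)` and
`h(aₙb) = ∑ (h₁a)ₙ(h₂b)` (the last condition quantified over all finite
representations of `Δ(h)`). -/
def IsHModuleFA [Module H V] [IsScalarTower k H V] (F : VAData k V) : Prop :=
  (∀ h : H, h • F.vac = (Coalgebra.counit (R := k) h) • F.vac) ∧
  (∀ (h : H) (a : V), h • (F.T a : V) = F.T (h • a)) ∧
  (∀ (h : H) (a b : V) (n : ℤ) (m : ℕ) (h1 h2 : Fin m → H),
      Coalgebra.comul (R := k) h = ∑ i, h1 i ⊗ₜ[k] h2 i →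
      h • (F.Y a n b : V) = ∑ i, F.Y (h1 i • a) n (h2 i • b))

/-- The smash product structure `V # H` on `V ⊗ H`:
`Y(a#h,z)(b#g) = ∑ Y(a,z)(h₁b) # h₂g`, vacuum `1#1`, translation `T#1`. -/
def SmashChar [Module H V] [IsScalarTower k H V] (F : VAData k V)
    (FS : VAData k (V ⊗[k] H)) : Prop :=
  (∀ (a b : V) (h g : H) (n : ℤ) (m : ℕ) (h1 h2 : Fin m → H),
      Coalgebra.comul (R := k) h = ∑ i, h1 i ⊗ₜ[k] h2 i →
      FS.Y (a ⊗ₜ[k] h) n (b ⊗ₜ[k] g) = ∑ i, (F.Y a n (h1 i • b) : V) ⊗ₜ[k] (h2 i * g)) ∧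
  (FS.vac = F.vac ⊗ₜ[k] (1 : H)) ∧
  (∀ (a : V) (h : H), FS.T (a ⊗ₜ[k] h) = (F.T a : V) ⊗ₜ[k] h)

end HopfDefs

/-- The fixed point subspace `V^H = {v | h v = ε(h) v for all h}`. -/
def hFixed (k V H : Type*) [CommRing k] [AddCommGroup V] [Module k V]
    [Ring H] [HopfAlgebra k H] [Module H V] [IsScalarTower k H V]
    [SMulCommClass k H V] : Submodule k V where
  carrier := {v : V | ∀ h : H, h • v = (Coalgebra.counit (R := k) h) • v}
  add_mem' := by
    intro a b ha hb h
    rw [smul_add, ha h, hb h, ← smul_add]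
  zero_mem' := by
    intro h
    simp
  smul_mem' := by
    intro c v hv h
    rw [← smul_comm c h v, hv h, smul_smul, smul_smul, mul_comm]

end HopfVA

namespace HopfVA

section HopfAux

open Coalgebra HopfAlgebra LinearMap TensorProduct
open scoped Coalgebra

variable {k : Type*} [CommRing k] {H : Type*} [Ring H] [HopfAlgebra k H]

lemma exists_fin_rep {M N : Type*} [AddCommMonoid M] [AddCommMonoid N]
    [Module k M] [Module k N] (z : M ⊗[k] N) :
    ∃ (m : ℕ) (a : Fin m → M) (b : Fin m → N), z = ∑ i, a i ⊗ₜ[k] b i := by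
  induction z with
  | zero => exact ⟨0, ![], ![], by simp⟩
  | tmul x y => exact ⟨1, fun _ => x, fun _ => y, by simp⟩
  | add u v hu hv =>
    obtain ⟨m, a, b, rfl⟩ := hu
    obtain ⟨n, c, d, rfl⟩ := hv
    refine ⟨m + n, Fin.append a c, Fin.append b d, ?_⟩
    rw [Fin.sum_univ_add]
    simp [Fin.append_left, Fin.append_right]

/-- `β : H ⊗ H → H ⊗ H`, `x ⊗ y ↦ Δ(x)·(1 ⊗ y)`. -/
noncomputable def beta : H ⊗[k] H →ₗ[k] H ⊗[k] H :=
  (LinearMap.mul' k (H ⊗[k] H)) ∘ₗ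
    (TensorProduct.map (Coalgebra.comul (R := k)) ((TensorProduct.mk k H H) 1))

lemma beta_tmul (x y : H) :
    beta (x ⊗ₜ[k] y) = Coalgebra.comul (R := k) x * ((1 : H) ⊗ₜ[k] y) := by
  simp [beta]

/-- `γ : H ⊗ H → H ⊗ H`, `x ⊗ y ↦ ∑ x₁ ⊗ S(x₂)·y`. -/
noncomputable def gamma : H ⊗[k] H →ₗ[k] H ⊗[k] H :=
  (LinearMap.lTensor H ((LinearMap.mul' k H) ∘ₗ
      (LinearMap.rTensor H (antipode (R := k))))) ∘ₗ
    (TensorProduct.assoc k H H H).toLinearMap ∘ₗ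
    (LinearMap.rTensor H (Coalgebra.comul (R := k)))

lemma gamma_tmul (x y : H) (r : Coalgebra.Repr k x (H × H)) :
    gamma (x ⊗ₜ[k] y) =
      ∑ i ∈ r.index, r.left i ⊗ₜ[k] (antipode (R := k) (r.right i) * y) := by
  simp only [gamma, LinearMap.comp_apply, LinearEquiv.coe_coe, LinearMap.rTensor_tmul,
    ← r.eq, TensorProduct.sum_tmul, map_sum, TensorProduct.assoc_tmul,
    LinearMap.lTensor_tmul, LinearMap.mul'_apply]

lemma sum_counit_smul {a : H} (r : Coalgebra.Repr k a (H × H)) :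
    ∑ i ∈ r.index, Coalgebra.counit (R := k) (r.left i) • r.right i = a := by
  have h := congrArg (TensorProduct.lid k H) (Coalgebra.sum_counit_tmul_eq r)
  rw [map_sum] at h
  simp only [TensorProduct.lid_tmul, one_smul] at h
  exact h

lemma sum_smul_counit {a : H} (r : Coalgebra.Repr k a (H × H)) :
    ∑ i ∈ r.index, Coalgebra.counit (R := k) (r.right i) • r.left i = a := by
  have h := congrArg (TensorProduct.rid k H) (Coalgebra.sum_tmul_counit_eq r)
  rw [map_sum] at h
  simp only [TensorProduct.rid_tmul, one_smul] at h
  exact h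

lemma key_nested' (x : H) (r : Coalgebra.Repr k x (H × H)) (ri : ∀ i, Coalgebra.Repr k (r.left i) (H × H)) :
    ∑ i ∈ r.index, ∑ j ∈ (ri i).index,
      (ri i).left j ⊗ₜ[k] (antipode (R := k) ((ri i).right j) * r.right i) = x ⊗ₜ[k] 1 := by
  have h3 := Coalgebra.sum_tmul_tmul_eq r ri (fun i => ℛ k (r.right i))
  apply_fun LinearMap.lTensor H ((LinearMap.mul' k H) ∘ₗ
      (LinearMap.rTensor H (antipode (R := k)))) at h3
  simp only [map_sum, LinearMap.lTensor_tmul, LinearMap.comp_apply, LinearMap.rTensor_tmul,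
    LinearMap.mul'_apply] at h3
  rw [h3]
  have h4 : ∀ i ∈ r.index,
      ∑ j ∈ (ℛ k (r.right i)).index,
        r.left i ⊗ₜ[k] (antipode (R := k) ((ℛ k (r.right i)).left j) * (ℛ k (r.right i)).right j)
        = Coalgebra.counit (R := k) (r.right i) • (r.left i ⊗ₜ[k] (1 : H)) := by
    intro i _
    rw [← TensorProduct.tmul_sum, HopfAlgebra.sum_antipode_mul_eq_smul, TensorProduct.tmul_smul]
  rw [Finset.sum_congr rfl h4]
  simp only [TensorProduct.smul_tmul']
  rw [← TensorProduct.sum_tmul, sum_smul_counit r]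

lemma key_nested (x : H) (r : Coalgebra.Repr k x (H × H)) (ri : ∀ i, Coalgebra.Repr k (r.left i) (H × H)) :
    ∑ i ∈ r.index, ∑ j ∈ (ri i).index,
      (ri i).left j ⊗ₜ[k] ((ri i).right j * antipode (R := k) (r.right i)) = x ⊗ₜ[k] 1 := by
  have h3 := Coalgebra.sum_tmul_tmul_eq r ri (fun i => ℛ k (r.right i))
  apply_fun LinearMap.lTensor H ((LinearMap.mul' k H) ∘ₗ
      (LinearMap.lTensor H (antipode (R := k)))) at h3
  simp only [map_sum, LinearMap.lTensor_tmul, LinearMap.comp_apply,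
    LinearMap.mul'_apply] at h3
  rw [h3]
  have h4 : ∀ i ∈ r.index,
      ∑ j ∈ (ℛ k (r.right i)).index,
        r.left i ⊗ₜ[k] ((ℛ k (r.right i)).left j * antipode (R := k) ((ℛ k (r.right i)).right j))
        = Coalgebra.counit (R := k) (r.right i) • (r.left i ⊗ₜ[k] (1 : H)) := by
    intro i _
    rw [← TensorProduct.tmul_sum, HopfAlgebra.sum_mul_antipode_eq_smul, TensorProduct.tmul_smul]
  rw [Finset.sum_congr rfl h4]
  simp only [TensorProduct.smul_tmul']
  rw [← TensorProduct.sum_tmul, sum_smul_counit r]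

lemma gamma_comul (x : H) : gamma (Coalgebra.comul (R := k) x) = x ⊗ₜ[k] 1 := by
  have r := ℛ k x
  rw [← r.eq, map_sum]
  rw [Finset.sum_congr rfl (fun i _ => gamma_tmul (r.left i) (r.right i) (ℛ k (r.left i)))]
  exact key_nested' x r (fun i => ℛ k (r.left i))

lemma gamma_mul_tmul (y : H) (z : H ⊗[k] H) :
    gamma (z * ((1 : H) ⊗ₜ[k] y)) = gamma z * ((1 : H) ⊗ₜ[k] y) := by
  induction z with
  | zero => simp
  | tmul c d =>
    rw [Algebra.TensorProduct.tmul_mul_tmul, mul_one,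
      gamma_tmul c (d * y) (ℛ k c), gamma_tmul c d (ℛ k c), Finset.sum_mul]
    refine Finset.sum_congr rfl fun i _ => ?_
    rw [Algebra.TensorProduct.tmul_mul_tmul, mul_one, mul_assoc]
  | add u v hu hv => rw [add_mul, map_add, map_add, hu, hv, add_mul]

lemma beta_mul_tmul (y : H) (z : H ⊗[k] H) :
    beta (z * ((1 : H) ⊗ₜ[k] y)) = beta z * ((1 : H) ⊗ₜ[k] y) := by
  induction z with
  | zero => simp
  | tmul c d =>
    rw [Algebra.TensorProduct.tmul_mul_tmul, mul_one, beta_tmul, beta_tmul, mul_assoc,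
      Algebra.TensorProduct.tmul_mul_tmul, one_mul]
  | add u v hu hv => rw [add_mul, map_add, map_add, hu, hv, add_mul]

lemma beta_hmul (h : H) (z : H ⊗[k] H) :
    beta ((h ⊗ₜ[k] (1 : H)) * z) = Coalgebra.comul (R := k) h * beta z := by
  induction z with
  | zero => simp
  | tmul c d =>
    rw [Algebra.TensorProduct.tmul_mul_tmul, one_mul, beta_tmul, beta_tmul,
      Bialgebra.comul_mul, mul_assoc]
  | add u v hu hv => rw [mul_add, map_add, map_add, hu, hv, mul_add]

lemma gamma_beta (z : H ⊗[k] H) : gamma (beta z) = z := by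
  induction z with
  | zero => simp
  | tmul x y =>
    rw [beta_tmul, gamma_mul_tmul, gamma_comul, Algebra.TensorProduct.tmul_mul_tmul, mul_one, one_mul]
  | add u v hu hv => rw [map_add, map_add, hu, hv]

lemma beta_gamma (z : H ⊗[k] H) : beta (gamma z) = z := by
  induction z with
  | zero => simp
  | tmul x y =>
    have h1 : (x ⊗ₜ[k] y) = (x ⊗ₜ[k] (1 : H)) * ((1 : H) ⊗ₜ[k] y) := by
      rw [Algebra.TensorProduct.tmul_mul_tmul, mul_one, one_mul]
    rw [h1, gamma_mul_tmul, beta_mul_tmul]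
    have h2 : beta (gamma (x ⊗ₜ[k] (1 : H))) = x ⊗ₜ[k] (1 : H) := by
      have r := ℛ k x
      rw [gamma_tmul x 1 r]
      simp only [mul_one, map_sum, beta_tmul]
      have h5 : ∀ i ∈ r.index,
          Coalgebra.comul (R := k) (r.left i) * ((1 : H) ⊗ₜ[k] antipode (R := k) (r.right i))
          = ∑ j ∈ (ℛ k (r.left i)).index,
              (ℛ k (r.left i)).left j ⊗ₜ[k]
                ((ℛ k (r.left i)).right j * antipode (R := k) (r.right i)) := by
        intro i _
        rw [← (ℛ k (r.left i)).eq, Finset.sum_mul]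
        refine Finset.sum_congr rfl fun j _ => ?_
        rw [Algebra.TensorProduct.tmul_mul_tmul, mul_one]
      rw [Finset.sum_congr rfl h5]
      exact key_nested x r (fun i => ℛ k (r.left i))
    rw [h2, Algebra.TensorProduct.tmul_mul_tmul, mul_one, one_mul]
  | add u v hu hv => rw [map_add, map_add, hu, hv]

/-- `ν : H ⊗ H → H`, `a ⊗ b ↦ ε(b)·a`. -/
noncomputable def nu : H ⊗[k] H →ₗ[k] H :=
  (TensorProduct.rid k H).toLinearMap ∘ₗ LinearMap.lTensor H (Coalgebra.counit (R := k))

lemma nu_tmul (a b : H) : nu (a ⊗ₜ[k] b) = Coalgebra.counit (R := k) b • a := by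
  simp [nu]

lemma nu_beta (z : H ⊗[k] H) : nu (beta z) = nu z := by
  induction z with
  | zero => simp
  | tmul x y =>
    rw [beta_tmul, nu_tmul]
    have r := ℛ k x
    rw [← r.eq, Finset.sum_mul, map_sum]
    have h1 : ∀ i ∈ r.index,
        nu ((r.left i ⊗ₜ[k] r.right i) * ((1 : H) ⊗ₜ[k] y))
        = Coalgebra.counit (R := k) y •
            (Coalgebra.counit (R := k) (r.right i) • r.left i) := by
      intro i _
      rw [Algebra.TensorProduct.tmul_mul_tmul, mul_one, nu_tmul, Bialgebra.counit_mul,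
        mul_comm, mul_smul]
    rw [Finset.sum_congr rfl h1, ← Finset.smul_sum, sum_smul_counit r]
  | add u v hu hv => rw [map_add, map_add, hu, hv, ← map_add]

end HopfAux

/-- For a finite-dimensional Hopf algebra `H`, an `H`-module field
algebra `V`, and a nonzero left integral `t` of `H`, the map `t̂ : V → V^H, v ↦ tv` is
surjective if and only if there exists a total integral `φ : H* → V`, i.e. a right
`H*`-comodule map (equivalently, a left `H`-module map for the action
`(h ⇀ f)(x) = f(xh)` on `H*`) with `φ(1_{H*}) = φ(ε) = 1`. -/
theorem statement8 {k : Type*} [Field k] [CharZero k]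
    {V : Type*} [AddCommGroup V] [Module k V]
    {H : Type*} [Ring H] [HopfAlgebra k H] [FiniteDimensional k H]
    [Module H V] [IsScalarTower k H V] [SMulCommClass k H V]
    (F : VAData k V) (hF : F.IsFieldAlgebra) (hHF : IsHModuleFA H F)
    (t : H) (ht : ∀ h : H, h * t = (Coalgebra.counit (R := k) h) • t) (ht0 : t ≠ 0) :
    (∀ v ∈ hFixed k V H, ∃ u : V, t • u = v) ↔
      (∃ φ : (H →ₗ[k] k) →ₗ[k] V,
        (∀ (h : H) (f : H →ₗ[k] k), φ (f ∘ₗ LinearMap.mulRight k h) = h • φ f) ∧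
        φ (Coalgebra.counit (R := k)) = F.vac) := by
  classical
  constructor
  · -- surjectivity ⇒ total integral
    intro hsurj
    obtain ⟨u, hu⟩ := hsurj F.vac (fun h => hHF.1 h)
    set Θ : H ⊗[k] H := gamma (t ⊗ₜ[k] (1 : H)) with hΘdef
    have hbeta : beta Θ = t ⊗ₜ[k] (1 : H) := beta_gamma _
    have hint : ∀ h : H, Coalgebra.comul (R := k) h * (t ⊗ₜ[k] (1 : H)) = t ⊗ₜ[k] h := by
      intro h
      have r := Coalgebra.Repr.arbitrary k h
      rw [← r.eq, Finset.sum_mul]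
      have h1 : ∀ i ∈ r.index,
          (r.left i ⊗ₜ[k] r.right i) * (t ⊗ₜ[k] (1 : H))
            = t ⊗ₜ[k] (Coalgebra.counit (R := k) (r.left i) • r.right i) := by
        intro i _
        rw [Algebra.TensorProduct.tmul_mul_tmul, mul_one, ht (r.left i),
          TensorProduct.smul_tmul, TensorProduct.tmul_smul]
      rw [Finset.sum_congr rfl h1, ← TensorProduct.tmul_sum, sum_counit_smul r]
    have hP2 : ∀ h : H, (h ⊗ₜ[k] (1 : H)) * Θ = Θ * ((1 : H) ⊗ₜ[k] h) := by
      intro h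
      have e1 : beta ((h ⊗ₜ[k] (1 : H)) * Θ) = t ⊗ₜ[k] h := by
        rw [beta_hmul, hbeta, hint]
      have e2 : beta (Θ * ((1 : H) ⊗ₜ[k] h)) = t ⊗ₜ[k] h := by
        rw [beta_mul_tmul, hbeta, Algebra.TensorProduct.tmul_mul_tmul, mul_one, one_mul]
      calc (h ⊗ₜ[k] (1 : H)) * Θ = gamma (beta ((h ⊗ₜ[k] (1 : H)) * Θ)) := (gamma_beta _).symm
        _ = gamma (beta (Θ * ((1 : H) ⊗ₜ[k] h))) := by rw [e1, e2]
        _ = Θ * ((1 : H) ⊗ₜ[k] h) := gamma_beta _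
    have hnu : nu Θ = t := by
      rw [← nu_beta, hbeta, nu_tmul, Bialgebra.counit_one, one_smul]
    obtain ⟨m, θ1, θ2, hrep⟩ := exists_fin_rep (k := k) Θ
    have hsum : ∑ i, Coalgebra.counit (R := k) (θ2 i) • θ1 i = t := by
      have h := congrArg nu hrep
      rw [hnu, map_sum] at h
      simp only [nu_tmul] at h
      exact h.symm
    refine ⟨∑ i : Fin m, (LinearMap.toSpanSingleton k V ((θ1 i) • u)) ∘ₗ
        (LinearMap.applyₗ (θ2 i)), ?_, ?_⟩
    · intro h f
      have e3 : (h ⊗ₜ[k] (1 : H)) * Θ = ∑ i, (h * θ1 i) ⊗ₜ[k] θ2 i := by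
        rw [hrep, Finset.mul_sum]
        refine Finset.sum_congr rfl fun i _ => ?_
        rw [Algebra.TensorProduct.tmul_mul_tmul, one_mul]
      have e4 : Θ * ((1 : H) ⊗ₜ[k] h) = ∑ i, θ1 i ⊗ₜ[k] (θ2 i * h) := by
        rw [hrep, Finset.sum_mul]
        refine Finset.sum_congr rfl fun i _ => ?_
        rw [Algebra.TensorProduct.tmul_mul_tmul, mul_one]
      have hP2' : ∑ i, (h * θ1 i) ⊗ₜ[k] θ2 i = ∑ i, θ1 i ⊗ₜ[k] (θ2 i * h) :=
        e3.symm.trans ((hP2 h).trans e4)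
      let B : H →ₗ[k] H →ₗ[k] V := LinearMap.mk₂ k (fun a b => f b • (a • u))
        (fun a a' b => show f b • ((a + a') • u) = f b • (a • u) + f b • (a' • u) by
          rw [add_smul, smul_add])
        (fun c a b => show f b • ((c • a) • u) = c • (f b • (a • u)) by
          rw [smul_assoc, smul_comm])
        (fun a b b' => show f (b + b') • (a • u) = f b • (a • u) + f b' • (a • u) by
          rw [map_add, add_smul])
        (fun c a b => show f (c • b) • (a • u) = c • (f b • (a • u)) by
          rw [map_smul, smul_eq_mul, mul_smul])
      have happ := congrArg (TensorProduct.lift B) hP2'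
      rw [map_sum, map_sum] at happ
      simp only [TensorProduct.lift.tmul, LinearMap.mk₂_apply, B] at happ
      simp only [LinearMap.sum_apply, LinearMap.comp_apply, LinearMap.applyₗ_apply_apply,
        LinearMap.toSpanSingleton_apply, LinearMap.mulRight_apply, Finset.smul_sum]
      calc ∑ i, f (θ2 i * h) • (θ1 i • u)
          = ∑ i, f (θ2 i) • ((h * θ1 i) • u) := happ.symm
        _ = ∑ i, h • (f (θ2 i) • (θ1 i • u)) := by
            refine Finset.sum_congr rfl fun i _ => ?_
            rw [mul_smul, smul_comm]
    · simp only [LinearMap.sum_apply, LinearMap.comp_apply, LinearMap.applyₗ_apply_apply,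
        LinearMap.toSpanSingleton_apply]
      calc ∑ i, Coalgebra.counit (R := k) (θ2 i) • (θ1 i • u)
          = ∑ i, (Coalgebra.counit (R := k) (θ2 i) • θ1 i) • u := by
            refine Finset.sum_congr rfl fun i _ => ?_
            rw [smul_assoc]
        _ = (∑ i, Coalgebra.counit (R := k) (θ2 i) • θ1 i) • u := by rw [Finset.sum_smul]
        _ = t • u := by rw [hsum]
        _ = F.vac := hu
  · -- total integral ⇒ surjectivity
    rintro ⟨φ, hφmod, hφ1⟩ v hv
    have hv' : ∀ h : H, h • v = Coalgebra.counit (R := k) h • v := hv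
    -- a functional with `g t = 1`
    have hker : LinearMap.ker (LinearMap.toSpanSingleton k H t) = ⊥ := by
      rw [LinearMap.ker_eq_bot']
      intro c hc
      rw [LinearMap.toSpanSingleton_apply] at hc
      by_contra hc0
      exact ht0 (by
        have : (c⁻¹ : k) • (c • t) = 0 := by rw [hc, smul_zero]
        rwa [smul_smul, inv_mul_cancel₀ hc0, one_smul] at this)
    obtain ⟨g, hg⟩ := LinearMap.exists_leftInverse_of_injective _ hker
    have hgt : g t = 1 := by
      have h1 := LinearMap.congr_fun hg 1
      simpa [LinearMap.toSpanSingleton_apply] using h1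
    have hcomp : (g ∘ₗ LinearMap.mulRight k t) = Coalgebra.counit (R := k) := by
      ext x
      rw [LinearMap.comp_apply, LinearMap.mulRight_apply, ht x, map_smul, hgt,
        smul_eq_mul, mul_one]
    have htw : t • φ g = F.vac := by
      rw [← hφmod t g, hcomp, hφ1]
    obtain ⟨m, h1, h2, hrep⟩ := exists_fin_rep (k := k) (Coalgebra.comul (R := k) t)
    have hsum : ∑ i, Coalgebra.counit (R := k) (h1 i) • h2 i = t := by
      have h := congrArg (fun z => (TensorProduct.lid k H)
        ((LinearMap.rTensor H (Coalgebra.counit (R := k))) z)) hrep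
      simp only [Coalgebra.rTensor_counit_comul, TensorProduct.lid_tmul, one_smul,
        map_sum, LinearMap.rTensor_tmul] at h
      exact h.symm
    refine ⟨F.Y v (-1) (φ g), ?_⟩
    rw [hHF.2.2 t v (φ g) (-1) m h1 h2 hrep]
    calc ∑ i, F.Y (h1 i • v) (-1) (h2 i • φ g)
        = ∑ i, Coalgebra.counit (R := k) (h1 i) • F.Y v (-1) (h2 i • φ g) := by
          refine Finset.sum_congr rfl fun i _ => ?_
          rw [hv' (h1 i)]
          have hYs : F.Y (Coalgebra.counit (R := k) (h1 i) • v)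
              = Coalgebra.counit (R := k) (h1 i) • F.Y v := map_smul F.Y _ _
          rw [hYs]
          rfl
      _ = F.Y v (-1) (∑ i, Coalgebra.counit (R := k) (h1 i) • (h2 i • φ g)) := by
          rw [map_sum]
          exact Finset.sum_congr rfl fun i _ => (map_smul (F.Y v (-1)) _ _).symm
      _ = F.Y v (-1) ((∑ i, Coalgebra.counit (R := k) (h1 i) • h2 i) • φ g) := by
          rw [Finset.sum_smul]
          exact congrArg _ (Finset.sum_congr rfl fun i _ => (smul_assoc _ _ _).symm)
      _ = F.Y v (-1) (t • φ g) := by rw [hsum]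
      _ = v := by rw [htw]; exact hF.1.2.2.2.1 v

end HopfVA
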